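/- Let X, X', Y, Y' be Hermitian 2×2 complex matrices with X² = I, X'² = I, Y² = I, Y'² = I, let S = X ⊗ Y - X ⊗ Y' + X' ⊗ Y + X' ⊗ Y' (Kronecker products), and let ρ be any 4×4 complex positive semidefinite matrix with trace 1. Then |Re Tr[ρ S]| ≤ 2√2. -/

import Mathlib

open Matrix Kronecker ComplexOrder

lemma psd_diag_nonneg {n : Type*} [Fintype n] [DecidableEq n] {M : Matrix n n ℂ}
    (hM : M.PosSemidef) (i : n) : 0 ≤ M i i := by
  have h := (Matrix.posSemidef_iff_dotProduct_mulVec.mp hM).2 ((Pi.single i (1:ℂ) : n → ℂ))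
  have hs : star (Pi.single i (1:ℂ) : n → ℂ) = (Pi.single i 1 : n → ℂ) := by
    ext j; simp [Pi.single_apply, apply_ite (star : ℂ → ℂ)]
  simpa [Matrix.mulVec_single, hs, single_dotProduct] using h

lemma psd_trace_nonneg {n : Type*} [Fintype n] [DecidableEq n] {M : Matrix n n ℂ}
    (hM : M.PosSemidef) : 0 ≤ M.trace := by
  rw [Matrix.trace]
  exact Finset.sum_nonneg fun i _ => psd_diag_nonneg hM i

lemma trace_mul_psd_nonneg {n : Type*} [Fintype n] [DecidableEq n] {A B : Matrix n n ℂ}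
    (hA : A.PosSemidef) (hB : B.PosSemidef) : 0 ≤ (A * B).trace := by
  open scoped MatrixOrder in obtain ⟨C, rfl⟩ := CStarAlgebra.nonneg_iff_eq_star_mul_self.mp hB.nonneg
  rw [← mul_assoc, Matrix.trace_mul_cycle]
  exact psd_trace_nonneg (hA.mul_mul_conjTranspose_same C)

lemma psd_smul {n : Type*} [Fintype n] {M : Matrix n n ℂ} (hM : M.PosSemidef)
    {r : ℝ} (hr : 0 ≤ r) : ((r : ℂ) • M).PosSemidef := by
  constructor
  · have := hM.1
    unfold Matrix.IsHermitian at this ⊢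
    rw [Matrix.conjTranspose_smul, this]
    simp [Complex.conj_ofReal]
  · exact (hM.smul (Complex.zero_le_real.mpr hr)).2

lemma kron_sub {l m n p : Type*} (A : Matrix l m ℂ) (B C : Matrix n p ℂ) :
    A ⊗ₖ (B - C) = A ⊗ₖ B - A ⊗ₖ C := by
  ext ⟨i, j⟩ ⟨k, l⟩
  simp [Matrix.kroneckerMap_apply, mul_sub]

lemma kron_neg {l m n p : Type*} (A : Matrix l m ℂ) (B : Matrix n p ℂ) :
    (-A) ⊗ₖ B = -(A ⊗ₖ B) := by
  ext ⟨i, j⟩ ⟨k, l⟩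
  simp [Matrix.kroneckerMap_apply]

lemma kron_herm {m n : Type*} [Fintype m] [Fintype n] {A : Matrix m m ℂ} {B : Matrix n n ℂ}
    (hA : A.IsHermitian) (hB : B.IsHermitian) : (A ⊗ₖ B).IsHermitian := by
  ext ⟨i, j⟩ ⟨k, l⟩
  simp only [Matrix.conjTranspose_apply, Matrix.kroneckerMap_apply, star_mul']
  rw [hA.apply, hB.apply]

lemma herm_comb (t : ℝ) {n : Type*} {A B : Matrix n n ℂ}
    (hA : A.IsHermitian) (hB : B.IsHermitian) : ((t : ℂ) • A - B).IsHermitian := by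
  have : ((t : ℂ) • A).IsHermitian := by
    unfold Matrix.IsHermitian at hA ⊢
    rw [Matrix.conjTranspose_smul, hA]
    simp [Complex.conj_ofReal]
  exact this.sub hB

/-- Key positivity: `2√2·I - S` is PSD. -/
lemma tsirelson_psd (X X' Y Y' : Matrix (Fin 2) (Fin 2) ℂ)
    (hXh : X.IsHermitian) (hX'h : X'.IsHermitian)
    (hYh : Y.IsHermitian) (hY'h : Y'.IsHermitian)
    (hX : X ^ 2 = 1) (hX' : X' ^ 2 = 1) (hY : Y ^ 2 = 1) (hY' : Y' ^ 2 = 1) :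
    ((((2 * Real.sqrt 2 : ℝ) : ℂ)) • (1 : Matrix (Fin 2 × Fin 2) (Fin 2 × Fin 2) ℂ)
      - (X ⊗ₖ Y - X ⊗ₖ Y' + X' ⊗ₖ Y + X' ⊗ₖ Y')).PosSemidef := by
  rw [pow_two] at hX hX' hY hY'
  set t : ℂ := ((Real.sqrt 2 : ℝ) : ℂ) with ht
  have hsq : t * t = 2 := by
    rw [ht, ← Complex.ofReal_mul, Real.mul_self_sqrt (by norm_num)]
    norm_num
  set A : Matrix (Fin 2 × Fin 2) (Fin 2 × Fin 2) ℂ := X ⊗ₖ 1 with hAdef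
  set B : Matrix (Fin 2 × Fin 2) (Fin 2 × Fin 2) ℂ := 1 ⊗ₖ (Y - Y') with hBdef
  set A' : Matrix (Fin 2 × Fin 2) (Fin 2 × Fin 2) ℂ := X' ⊗ₖ 1 with hA'def
  set B' : Matrix (Fin 2 × Fin 2) (Fin 2 × Fin 2) ℂ := 1 ⊗ₖ (Y + Y') with hB'def
  set P : Matrix (Fin 2 × Fin 2) (Fin 2 × Fin 2) ℂ := t • A - B with hPdef
  set Q : Matrix (Fin 2 × Fin 2) (Fin 2 × Fin 2) ℂ := t • A' - B' with hQdef
  have hAA : A * A = 1 := by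
    rw [hAdef, ← Matrix.mul_kronecker_mul, hX, Matrix.one_mul, Matrix.one_kronecker_one]
  have hA'A' : A' * A' = 1 := by
    rw [hA'def, ← Matrix.mul_kronecker_mul, hX', Matrix.one_mul, Matrix.one_kronecker_one]
  have hAB : A * B = X ⊗ₖ (Y - Y') := by
    rw [hAdef, hBdef, ← Matrix.mul_kronecker_mul, Matrix.mul_one, Matrix.one_mul]
  have hBA : B * A = X ⊗ₖ (Y - Y') := by
    rw [hAdef, hBdef, ← Matrix.mul_kronecker_mul, Matrix.mul_one, Matrix.one_mul]
  have hA'B' : A' * B' = X' ⊗ₖ (Y + Y') := by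
    rw [hA'def, hB'def, ← Matrix.mul_kronecker_mul, Matrix.mul_one, Matrix.one_mul]
  have hB'A' : B' * A' = X' ⊗ₖ (Y + Y') := by
    rw [hA'def, hB'def, ← Matrix.mul_kronecker_mul, Matrix.mul_one, Matrix.one_mul]
  have hBBe : B * B = (2 : ℂ) • 1 - 1 ⊗ₖ (Y * Y') - 1 ⊗ₖ (Y' * Y) := by
    rw [hBdef, ← Matrix.mul_kronecker_mul, Matrix.one_mul]
    have hsq' : (Y - Y') * (Y - Y') = (2 : ℂ) • 1 - Y * Y' - Y' * Y := by
      have h1 : (Y - Y') * (Y - Y') = Y * Y - Y * Y' - Y' * Y + Y' * Y' := by noncomm_ring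
      rw [h1, hY, hY']; module
    rw [hsq', kron_sub, kron_sub, Matrix.kronecker_smul, Matrix.one_kronecker_one]
  have hB'B'e : B' * B' = (2 : ℂ) • 1 + 1 ⊗ₖ (Y * Y') + 1 ⊗ₖ (Y' * Y) := by
    rw [hB'def, ← Matrix.mul_kronecker_mul, Matrix.one_mul]
    have hsq' : (Y + Y') * (Y + Y') = (2 : ℂ) • 1 + Y * Y' + Y' * Y := by
      have h1 : (Y + Y') * (Y + Y') = Y * Y + Y * Y' + Y' * Y + Y' * Y' := by noncomm_ring
      rw [h1, hY, hY']; module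
    rw [hsq', Matrix.kronecker_add, Matrix.kronecker_add, Matrix.kronecker_smul,
      Matrix.one_kronecker_one]
  have hPP : P * P = (2 : ℂ) • 1 - (2 * t) • (X ⊗ₖ (Y - Y')) + B * B := by
    rw [hPdef]
    simp only [sub_mul, mul_sub, Matrix.smul_mul, Matrix.mul_smul, smul_smul, hAA, hAB, hBA, hsq]
    module
  have hQQ : Q * Q = (2 : ℂ) • 1 - (2 * t) • (X' ⊗ₖ (Y + Y')) + B' * B' := by
    rw [hQdef]
    simp only [sub_mul, mul_sub, Matrix.smul_mul, Matrix.mul_smul, smul_smul, hA'A', hA'B',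
      hB'A', hsq]
    module
  have hXYsub : X ⊗ₖ (Y - Y') = X ⊗ₖ Y - X ⊗ₖ Y' := kron_sub X Y Y'
  have hXYadd : X' ⊗ₖ (Y + Y') = X' ⊗ₖ Y + X' ⊗ₖ Y' := Matrix.kronecker_add X' Y Y'
  have hcoef : (2 * t) * (((2 * Real.sqrt 2 : ℝ) : ℂ)) = 8 := by
    have h2t : ((2 * Real.sqrt 2 : ℝ) : ℂ) = 2 * t := by rw [ht]; push_cast; ring
    rw [h2t]
    calc (2 * t) * (2 * t) = 4 * (t * t) := by ring
      _ = 8 := by rw [hsq]; norm_num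
  have hsum : P * P + Q * Q = (2 * t) • ((((2 * Real.sqrt 2 : ℝ) : ℂ)) • 1
      - (X ⊗ₖ Y - X ⊗ₖ Y' + X' ⊗ₖ Y + X' ⊗ₖ Y')) := by
    rw [smul_sub, smul_smul, hcoef, hPP, hQQ, hBBe, hB'B'e, hXYsub, hXYadd]
    module
  -- Now conclude PSD
  have hPh : P.IsHermitian := by
    rw [hPdef]
    exact herm_comb _ (kron_herm hXh Matrix.isHermitian_one) (kron_herm Matrix.isHermitian_one
      (hYh.sub hY'h))
  have hQh : Q.IsHermitian := by
    rw [hQdef]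
    exact herm_comb _ (kron_herm hX'h Matrix.isHermitian_one) (kron_herm Matrix.isHermitian_one
      (hYh.add hY'h))
  have hPPpsd : (P * P).PosSemidef := by
    have := Matrix.posSemidef_conjTranspose_mul_self P
    rwa [hPh.eq] at this
  have hQQpsd : (Q * Q).PosSemidef := by
    have := Matrix.posSemidef_conjTranspose_mul_self Q
    rwa [hQh.eq] at this
  have hsumpsd : (P * P + Q * Q).PosSemidef := hPPpsd.add hQQpsd
  rw [hsum] at hsumpsd
  have hr : (0:ℝ) ≤ (2 * Real.sqrt 2)⁻¹ := by positivity
  have := psd_smul hsumpsd hr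
  have hne : ((2 * Real.sqrt 2 : ℝ) : ℂ) ≠ 0 := by
    simp only [ne_eq, Complex.ofReal_eq_zero]
    positivity
  have hcancel : (((2 * Real.sqrt 2)⁻¹ : ℝ) : ℂ) • ((2 * t) •
      ((((2 * Real.sqrt 2 : ℝ) : ℂ)) • (1 : Matrix (Fin 2 × Fin 2) (Fin 2 × Fin 2) ℂ)
        - (X ⊗ₖ Y - X ⊗ₖ Y' + X' ⊗ₖ Y + X' ⊗ₖ Y'))) =
      (((2 * Real.sqrt 2 : ℝ) : ℂ)) • 1 - (X ⊗ₖ Y - X ⊗ₖ Y' + X' ⊗ₖ Y + X' ⊗ₖ Y') := by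
    rw [smul_smul]
    have : (((2 * Real.sqrt 2)⁻¹ : ℝ) : ℂ) * (2 * t) = 1 := by
      push_cast
      rw [show ((Real.sqrt 2 : ℝ) : ℂ) = t from rfl]
      field_simp
      exact div_self (by rw [ht]; exact Complex.ofReal_ne_zero.mpr (by positivity))
    rw [this, one_smul]
  rwa [hcancel] at this

theorem stmt_13 (X X' Y Y' : Matrix (Fin 2) (Fin 2) ℂ)
    (hXh : X.IsHermitian) (hX'h : X'.IsHermitian)
    (hYh : Y.IsHermitian) (hY'h : Y'.IsHermitian)
    (hX : X ^ 2 = 1) (hX' : X' ^ 2 = 1) (hY : Y ^ 2 = 1) (hY' : Y' ^ 2 = 1)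
    (S : Matrix (Fin 2 × Fin 2) (Fin 2 × Fin 2) ℂ)
    (hS : S = X ⊗ₖ Y - X ⊗ₖ Y' + X' ⊗ₖ Y + X' ⊗ₖ Y')
    (ρ : Matrix (Fin 2 × Fin 2) (Fin 2 × Fin 2) ℂ)
    (hρ : ρ.PosSemidef) (htr : ρ.trace = 1) :
    |((ρ * S).trace).re| ≤ 2 * Real.sqrt 2 := by
  set κ : ℂ := ((2 * Real.sqrt 2 : ℝ) : ℂ) with hκ
  have hupper : (κ • (1 : Matrix (Fin 2 × Fin 2) (Fin 2 × Fin 2) ℂ) - S).PosSemidef := by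
    rw [hS]
    exact tsirelson_psd X X' Y Y' hXh hX'h hYh hY'h hX hX' hY hY'
  have hlower : (κ • (1 : Matrix (Fin 2 × Fin 2) (Fin 2 × Fin 2) ℂ) + S).PosSemidef := by
    have h := tsirelson_psd (-X) (-X') Y Y' hXh.neg hX'h.neg hYh hY'h
      (by rw [neg_sq]; exact hX) (by rw [neg_sq]; exact hX') hY hY'
    have hneg : (-X) ⊗ₖ Y - (-X) ⊗ₖ Y' + (-X') ⊗ₖ Y + (-X') ⊗ₖ Y' = -S := by
      rw [hS, kron_neg, kron_neg, kron_neg, kron_neg]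
      abel
    rw [hneg, sub_neg_eq_add] at h
    exact h
  have h1 : 0 ≤ (ρ * (κ • 1 - S)).trace := trace_mul_psd_nonneg hρ hupper
  have h2 : 0 ≤ (ρ * (κ • 1 + S)).trace := trace_mul_psd_nonneg hρ hlower
  have hexp1 : (ρ * (κ • 1 - S)).trace = κ - (ρ * S).trace := by
    rw [Matrix.mul_sub, Matrix.mul_smul, Matrix.mul_one, Matrix.trace_sub, Matrix.trace_smul,
      htr, smul_eq_mul, mul_one]
  have hexp2 : (ρ * (κ • 1 + S)).trace = κ + (ρ * S).trace := by
    rw [Matrix.mul_add, Matrix.mul_smul, Matrix.mul_one, Matrix.trace_add, Matrix.trace_smul,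
      htr, smul_eq_mul, mul_one]
  rw [hexp1] at h1
  rw [hexp2] at h2
  rw [Complex.le_def] at h1 h2
  have hκre : κ.re = 2 * Real.sqrt 2 := by rw [hκ]; simp
  rw [abs_le]
  constructor
  · have := h2.1
    simp only [Complex.zero_re, Complex.add_re, hκre] at this
    linarith
  · have := h1.1
    simp only [Complex.zero_re, Complex.sub_re, hκre] at this
    linarith
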